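/- The rationals ℚ with the proper invariant metric induced by the norm ‖m/n‖_ℚ = |m/n| + ln(n) (m/n in standard form) have asymptotic dimension exactly 1. -/

import Mathlib

/-- `d` is a metric on `X` (given as an explicit distance function). -/
def IsMetricD {X : Type*} (d : X → X → ℝ) : Prop :=
  (∀ x y, 0 ≤ d x y) ∧ (∀ x y, d x y = 0 ↔ x = y) ∧ (∀ x y, d x y = d y x) ∧
    ∀ x y z, d x z ≤ d x y + d y z

/-- A set is bounded with respect to the distance function `d`. -/
def IsBoundedD {X : Type*} (d : X → X → ℝ) (B : Set X) : Prop :=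
  ∃ C : ℝ, ∀ x ∈ B, ∀ y ∈ B, d x y ≤ C

/-- `f` is bornologous with respect to the distance functions `dX`, `dY`. -/
def BornologousD {X Y : Type*} (dX : X → X → ℝ) (dY : Y → Y → ℝ) (f : X → Y) : Prop :=
  ∀ R > (0 : ℝ), ∃ S > (0 : ℝ), ∀ x y, dX x y < R → dY (f x) (f y) < S

/-- `f` is metrically proper: preimages of bounded sets are bounded. -/
def MetricallyProperD {X Y : Type*} (dX : X → X → ℝ) (dY : Y → Y → ℝ) (f : X → Y) : Prop :=
  ∀ B : Set Y, IsBoundedD dY B → IsBoundedD dX (f ⁻¹' B)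

/-- A coarse map is bornologous and metrically proper. -/
def CoarseMapD {X Y : Type*} (dX : X → X → ℝ) (dY : Y → Y → ℝ) (f : X → Y) : Prop :=
  BornologousD dX dY f ∧ MetricallyProperD dX dY f

/-- Two maps are close if pointwise distances are uniformly bounded. -/
def CloseD {X Y : Type*} (dY : Y → Y → ℝ) (f g : X → Y) : Prop :=
  ∃ C : ℝ, ∀ x, dY (f x) (g x) ≤ C

/-- `f` is a coarse equivalence: a coarse map with a coarse inverse up to closeness. -/
def CoarseEquivD {X Y : Type*} (dX : X → X → ℝ) (dY : Y → Y → ℝ) (f : X → Y) : Prop :=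
  CoarseMapD dX dY f ∧ ∃ g : Y → X, CoarseMapD dY dX g ∧
    CloseD dY (f ∘ g) id ∧ CloseD dX (g ∘ f) id

/-- A family of sets is `d`-disjoint: points in distinct members are at distance `> d`. -/
def DDisjointD {X : Type*} (dist : X → X → ℝ) (d : ℝ) (U : Set (Set X)) : Prop :=
  ∀ A ∈ U, ∀ B ∈ U, A ≠ B → ∀ x ∈ A, ∀ y ∈ B, d < dist x y

/-- A family of sets is `R`-bounded: each member has diameter at most `R`. -/
def BoundedFamD {X : Type*} (dist : X → X → ℝ) (R : ℝ) (U : Set (Set X)) : Prop :=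
  ∀ A ∈ U, ∀ x ∈ A, ∀ y ∈ A, dist x y ≤ R

/-- Asymptotic dimension at most `n`: for every `d > 0` there are `n+1` `d`-disjoint
uniformly bounded families of subsets whose union covers the space. -/
def AsdimLE_D {X : Type*} (dist : X → X → ℝ) (n : ℕ) : Prop :=
  ∀ d > (0 : ℝ), ∃ R : ℝ, ∃ U : Fin (n + 1) → Set (Set X),
    (∀ i, DDisjointD dist d (U i)) ∧ (∀ i, BoundedFamD dist R (U i)) ∧
    ∀ x : X, ∃ i, ∃ A ∈ U i, x ∈ A

/-- The norm `‖m/n‖ = |m/n| + ln n` on `ℚ`, for `m/n` in standard form. -/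
noncomputable def qNorm (q : ℚ) : ℝ := |(q : ℝ)| + Real.log q.den

/-- The left-invariant metric on `ℚ` induced by `qNorm`. -/
noncomputable def qDist (x y : ℚ) : ℝ := qNorm (y - x)


lemma aux_int_mul_of_den_dvd (q : ℚ) (M : ℕ) (h : q.den ∣ M) : ∃ z : ℤ, q * (M:ℚ) = (z:ℚ) := by
  obtain ⟨t, ht⟩ := h
  refine ⟨q.num * t, ?_⟩
  rw [ht]
  push_cast
  rw [← mul_assoc, Rat.mul_den_eq_num]

lemma aux_den_dvd_of_int_mul (q : ℚ) (M : ℕ) (hM : 0 < M) (z : ℤ) (h : q * (M:ℚ) = (z:ℚ)) :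
    (q.den : ℤ) ∣ (M:ℤ) := by
  have hq : q = Rat.divInt z M := by
    rw [Rat.divInt_eq_div]
    field_simp at h ⊢
    push_cast at h ⊢
    linarith [h]
  rw [hq]
  exact Rat.den_dvd z M

/-- `ℚ` with the proper invariant metric induced by `qNorm` has asymptotic dimension
exactly `1`. -/
theorem stmt17 : AsdimLE_D qDist 1 ∧ ¬ AsdimLE_D qDist 0 := by
  constructor
  · intro d hd
    set N : ℕ := ⌈Real.exp d⌉₊ with hNdef
    set M : ℕ := Nat.factorial N with hMdef
    have hMpos : 0 < M := Nat.factorial_pos N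
    set L : ℝ := d + 1 with hLdef
    have hL0 : 0 < L := by positivity
    refine ⟨L + Real.log M, fun i => { A | ∃ (c : ℚ) (k : ℤ), k % 2 = (i.val : ℤ) ∧
        A = { q : ℚ | (∃ z : ℤ, (q - c) * (M:ℚ) = (z:ℚ)) ∧ (k:ℝ) * L ≤ (q:ℝ) ∧ (q:ℝ) < (k+1) * L } },
      ?_, ?_, ?_⟩
    · rintro i A ⟨c, k, hk, rfl⟩ B ⟨c', k', hk', rfl⟩ hAB x hx y hy
      obtain ⟨⟨z1, hz1⟩, hx1, hx2⟩ := hx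
      obtain ⟨⟨z2, hz2⟩, hy1, hy2⟩ := hy
      have hden1 : 1 ≤ ((y - x).den : ℝ) := by exact_mod_cast (y - x).pos
      by_cases h : ∃ z : ℤ, ((y - x) * (M:ℚ)) = (z:ℚ)
      · obtain ⟨z3, hz3⟩ := h
        have hkk : k ≠ k' := by
          rintro rfl
          apply hAB
          ext q
          simp only [Set.mem_setOf_eq, and_congr_left_iff]
          intro _
          constructor
          · rintro ⟨z, hz⟩
            exact ⟨z - z3 - z1 + z2, by push_cast; linear_combination hz - hz3 - hz1 + hz2⟩
          · rintro ⟨z, hz⟩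
            exact ⟨z + z3 + z1 - z2, by push_cast; linear_combination hz + hz3 + hz1 - hz2⟩
        have hpar : k + 2 ≤ k' ∨ k' + 2 ≤ k := by omega
        have habs : L ≤ |((y:ℝ) - (x:ℝ))| := by
          rcases hpar with hp | hp
          · have : ((k:ℝ) + 2) * L ≤ (k':ℝ) * L := by
              apply mul_le_mul_of_nonneg_right _ hL0.le
              exact_mod_cast hp
            rw [abs_of_nonneg (by nlinarith)]
            nlinarith
          · have : ((k':ℝ) + 2) * L ≤ (k:ℝ) * L := by
              apply mul_le_mul_of_nonneg_right _ hL0.le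
              exact_mod_cast hp
            rw [abs_of_nonpos (by nlinarith)]
            nlinarith
        have hlog : 0 ≤ Real.log ((y - x).den : ℝ) := Real.log_nonneg hden1
        unfold qDist qNorm
        push_cast
        simp only [hLdef] at habs
        nlinarith [abs_nonneg ((y:ℝ) - (x:ℝ))]
      · have hden : N < (y - x).den := by
          by_contra hle
          push_neg at hle
          exact h (aux_int_mul_of_den_dvd _ _ (Nat.dvd_factorial (y - x).pos hle))
        have hexp : Real.exp d < ((y - x).den : ℝ) := by
          calc Real.exp d ≤ (N : ℝ) := Nat.le_ceil _
          _ < _ := by exact_mod_cast hden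
        have hlog : d < Real.log ((y - x).den : ℝ) := by
          rw [Real.lt_log_iff_exp_lt (by linarith [Real.exp_pos d])]
          exact hexp
        unfold qDist qNorm
        have := abs_nonneg (((y - x : ℚ)) : ℝ)
        linarith
    · rintro i A ⟨c, k, hk, rfl⟩ x ⟨⟨z1, hz1⟩, hx1, hx2⟩ y ⟨⟨z2, hz2⟩, hy1, hy2⟩
      have hz3 : (y - x) * (M:ℚ) = ((z2 - z1 : ℤ) : ℚ) := by
        push_cast; linear_combination hz2 - hz1
      have hdvd : ((y - x).den : ℤ) ∣ (M : ℤ) := aux_den_dvd_of_int_mul _ _ hMpos _ hz3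
      have hdenM : (y - x).den ≤ M := Nat.le_of_dvd hMpos (by exact_mod_cast hdvd)
      have hlog : Real.log ((y - x).den : ℝ) ≤ Real.log (M : ℝ) :=
        Real.log_le_log (by exact_mod_cast (y - x).pos) (by exact_mod_cast hdenM)
      have habs : |((y:ℝ) - (x:ℝ))| ≤ L := by
        rw [abs_sub_le_iff]
        constructor <;> nlinarith
      unfold qDist qNorm
      push_cast
      linarith
    · intro q
      set k : ℤ := ⌊(q:ℝ) / L⌋ with hkdef
      have hk1 : (k:ℝ) * L ≤ (q:ℝ) := by
        rw [← le_div_iff₀ hL0]; exact Int.floor_le _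
      have hk2 : (q:ℝ) < ((k:ℝ) + 1) * L := by
        rw [← div_lt_iff₀ hL0]; exact Int.lt_floor_add_one _
      rcases Int.emod_two_eq k with hp | hp
      · exact ⟨0, _, ⟨q, k, by simpa using hp, rfl⟩, ⟨0, by push_cast; ring⟩, hk1, hk2⟩
      · exact ⟨1, _, ⟨q, k, by simpa using hp, rfl⟩, ⟨0, by push_cast; ring⟩, hk1, hk2⟩
  · intro h
    obtain ⟨R, U, hdisj, hbd, hcov⟩ := h 1 one_pos
    have hc : ∀ n : ℕ, ∃ A, A ∈ U 0 ∧ (n : ℚ) ∈ A := by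
      intro n
      obtain ⟨i, A, hA, hx⟩ := hcov n
      exact ⟨A, by rwa [Subsingleton.elim (0 : Fin 1) i], hx⟩
    choose A hAU hAmem using hc
    have hstep : ∀ n : ℕ, A (n + 1) = A n := by
      intro n
      by_contra hne
      have := hdisj 0 _ (hAU (n+1)) _ (hAU n) hne _ (hAmem (n+1)) _ (hAmem n)
      have hq : qDist ((n+1 : ℕ) : ℚ) ((n : ℕ) : ℚ) = 1 := by
        have h1 : ((n : ℕ) : ℚ) - ((n+1 : ℕ) : ℚ) = -1 := by push_cast; ring
        unfold qDist qNorm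
        rw [h1]
        norm_num
      rw [hq] at this
      linarith
    have hall : ∀ n : ℕ, A n = A 0 := by
      intro n
      induction n with
      | zero => rfl
      | succ m ih => rw [hstep m, ih]
    have hbound : ∀ n : ℕ, (n : ℝ) ≤ R := by
      intro n
      have h1 := hbd 0 _ (hAU 0) _ (hAmem 0) ((n : ℚ)) (hall n ▸ hAmem n)
      have hq : qDist ((0 : ℕ) : ℚ) ((n : ℕ) : ℚ) = n := by
        unfold qDist qNorm
        norm_num
      rwa [hq] at h1
    have := hbound (⌈R⌉₊ + 1)
    have h2 : (R : ℝ) ≤ (⌈R⌉₊ : ℝ) := Nat.le_ceil R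
    push_cast at this
    linarith
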